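/- Let (Ω, F, P) be an atomless probability space, let α ∈ (0,1) and let ℓ ∈ [0,∞] (in the extended nonnegative reals). Then the following are equivalent: (i) for every measurable set A ⊆ Ω, one has ℓ · P(A) ≤ 1 if and only if P(A) ≤ α; (ii) ℓ = 1/α. -/

import Mathlib

open MeasureTheory ENNReal

/-- A measure is atomless if every measurable set of positive measure has a
measurable subset of strictly intermediate positive measure. -/
def Atomless {Ω : Type*} [MeasurableSpace Ω] (P : Measure Ω) : Prop :=
  ∀ A : Set Ω, MeasurableSet A → P A ≠ 0 →
    ∃ B : Set Ω, B ⊆ A ∧ MeasurableSet B ∧ 0 < P B ∧ P B < P A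

section Aux

variable {Ω : Type*} [MeasurableSpace Ω] (P : Measure Ω) [IsProbabilityMeasure P]

/-- Halving: an atomless set of positive measure has a subset of positive measure
at most half the total. -/
lemma atomless_half (hP : Atomless P) {A : Set Ω} (hA : MeasurableSet A) (h0 : P A ≠ 0) :
    ∃ B : Set Ω, B ⊆ A ∧ MeasurableSet B ∧ 0 < P B ∧ P B ≤ P A / 2 := by
  obtain ⟨B, hBA, hBm, hB0, hBlt⟩ := hP A hA h0
  rcases le_or_gt (P B) (P A / 2) with h | h
  · exact ⟨B, hBA, hBm, hB0, h⟩
  · refine ⟨A \ B, Set.diff_subset, hA.diff hBm, ?_, ?_⟩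
    · rw [measure_diff hBA hBm.nullMeasurableSet (measure_ne_top P B)]
      exact tsub_pos_of_lt hBlt
    · rw [measure_diff hBA hBm.nullMeasurableSet (measure_ne_top P B)]
      refine tsub_le_iff_right.mpr ?_
      calc P A = P A / 2 + P A / 2 := (ENNReal.add_halves _).symm
      _ ≤ P A / 2 + P B := add_le_add_right h.le _

/-- Small pieces: an atomless set of positive measure has subsets of arbitrarily
small positive measure. -/
lemma atomless_small (hP : Atomless P) {A : Set Ω} (hA : MeasurableSet A) (h0 : P A ≠ 0)
    {ε : ℝ≥0∞} (hε : ε ≠ 0) :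
    ∃ B : Set Ω, B ⊆ A ∧ MeasurableSet B ∧ 0 < P B ∧ P B ≤ ε := by
  obtain ⟨n, hn⟩ := ENNReal.exists_inv_two_pow_lt hε
  have key : ∀ n : ℕ, ∃ B : Set Ω, B ⊆ A ∧ MeasurableSet B ∧ 0 < P B ∧ P B ≤ P A * 2⁻¹ ^ n := by
    intro n
    induction n with
    | zero => exact ⟨A, subset_rfl, hA, pos_iff_ne_zero.mpr h0, by simp⟩
    | succ n ih =>
      obtain ⟨B, hBA, hBm, hB0, hBle⟩ := ih
      obtain ⟨C, hCB, hCm, hC0, hCle⟩ := atomless_half P hP hBm hB0.ne'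
      refine ⟨C, hCB.trans hBA, hCm, hC0, hCle.trans ?_⟩
      calc P B / 2 = P B * 2⁻¹ := by rw [div_eq_mul_inv]
      _ ≤ (P A * 2⁻¹ ^ n) * 2⁻¹ := by gcongr
      _ = P A * 2⁻¹ ^ (n + 1) := by rw [pow_succ, mul_assoc]
  obtain ⟨B, hBA, hBm, hB0, hBle⟩ := key n
  refine ⟨B, hBA, hBm, hB0, hBle.trans ?_⟩
  calc P A * 2⁻¹ ^ n ≤ 1 * 2⁻¹ ^ n := by gcongr; exact prob_le_one
  _ = 2⁻¹ ^ n := one_mul _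
  _ ≤ ε := hn.le

/-- Sierpiński: an atomless probability measure attains every value in `[0,1]`. -/
lemma atomless_exists_measure_eq (hP : Atomless P) {t : ℝ≥0∞} (ht : t ≤ 1) :
    ∃ A : Set Ω, MeasurableSet A ∧ P A = t := by
  classical
  -- the predicate for the greedy choice at stage with current set `A`
  set pred : Set Ω → Set Ω → Prop := fun A C =>
    C ⊆ Aᶜ ∧ MeasurableSet C ∧ P A + P C ≤ t ∧
      sSup {x | ∃ D : Set Ω, D ⊆ Aᶜ ∧ MeasurableSet D ∧ P A + P D ≤ t ∧ P D = x} ≤ 2 * P C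
    with hpred
  have exC : ∀ A : Set Ω, P A ≤ t → ∃ C, pred A C := by
    intro A hAt
    set S : Set ℝ≥0∞ := {x | ∃ D : Set Ω, D ⊆ Aᶜ ∧ MeasurableSet D ∧ P A + P D ≤ t ∧ P D = x}
      with hS
    have h0S : (0 : ℝ≥0∞) ∈ S := ⟨∅, Set.empty_subset _, MeasurableSet.empty, by simpa, by simp⟩
    have hSbd : ∀ x ∈ S, x ≤ t := by
      rintro x ⟨D, -, -, hD, rfl⟩
      exact le_trans le_add_self hD
    rcases eq_or_ne (sSup S) 0 with hs | hs
    · exact ⟨∅, Set.empty_subset _, MeasurableSet.empty, by simpa, by simp [← hS, hs]⟩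
    · have hstop : sSup S ≠ ∞ := by
        refine ne_top_of_le_ne_top (by simp : (1 : ℝ≥0∞) ≠ ∞) ?_
        exact sSup_le fun x hx => le_trans (hSbd x hx) ht
      have hhalf : sSup S / 2 < sSup S := ENNReal.half_lt_self hs hstop
      obtain ⟨x, hxS, hxlt⟩ := lt_sSup_iff.mp hhalf
      obtain ⟨D, hD1, hD2, hD3, rfl⟩ := hxS
      refine ⟨D, hD1, hD2, hD3, ?_⟩
      calc sSup S = 2 * (sSup S / 2) := by
            rw [ENNReal.mul_div_cancel' (by norm_num) (by norm_num)]
      _ ≤ 2 * P D := mul_le_mul_right hxlt.le _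
  -- the greedy sequence
  set seq : ℕ → Set Ω := fun n => Nat.rec ∅
    (fun _ A => A ∪ (if h : ∃ C, pred A C then h.choose else ∅)) n with hseq
  have seq_succ : ∀ n, seq (n + 1) =
      seq n ∪ (if h : ∃ C, pred (seq n) C then h.choose else ∅) := fun n => rfl
  have inv : ∀ n, MeasurableSet (seq n) ∧ P (seq n) ≤ t := by
    intro n
    induction n with
    | zero => simpa [hseq] using zero_le t
    | succ n ih =>
      obtain ⟨hm, hle⟩ := ih
      rw [seq_succ, dif_pos (exC (seq n) hle)]
      obtain ⟨hC1, hC2, hC3, -⟩ := (exC (seq n) hle).choose_spec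
      exact ⟨hm.union hC2, le_trans (measure_union_le _ _) hC3⟩
  have seq_mono : Monotone seq := by
    refine monotone_nat_of_le_succ fun n => ?_
    rw [seq_succ]; exact Set.subset_union_left
  -- the measure of the union is the supremum
  set Ainf : Set Ω := ⋃ n, seq n with hAinf
  have hAm : MeasurableSet Ainf := MeasurableSet.iUnion fun n => (inv n).1
  have hPA : P Ainf = ⨆ n, P (seq n) := (seq_mono.directed_le).measure_iUnion
  have hle : P Ainf ≤ t := by rw [hPA]; exact iSup_le fun n => (inv n).2
  refine ⟨Ainf, hAm, ?_⟩
  by_contra hne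
  have hlt : P Ainf < t := lt_of_le_of_ne hle hne
  -- find a small piece in the complement
  have hr0 : t - P Ainf ≠ 0 := by
    simpa [tsub_eq_zero_iff_le, not_le] using hlt
  have hcompl : P Ainfᶜ ≠ 0 := by
    intro h
    have h1 : (1 : ℝ≥0∞) ≤ P Ainf := by
      have h2 := measure_union_le (μ := P) Ainf Ainfᶜ
      rw [Set.union_compl_self, measure_univ, h, add_zero] at h2
      exact h2
    exact absurd hlt (not_lt.mpr (ht.trans h1))
  obtain ⟨C, hCsub, hCm, hC0, hCle⟩ := atomless_small P hP hAm.compl hcompl hr0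
  -- at each stage, `C` witnesses that the supremum is at least `P C`
  have hstep : ∀ n, P (seq n) + P C / 2 ≤ P (seq (n + 1)) := by
    intro n
    have hPn := (inv n).2
    rw [seq_succ, dif_pos (exC (seq n) hPn)]
    obtain ⟨hC1, hC2, hC3, hC4⟩ := (exC (seq n) hPn).choose_spec
    set Cn := (exC (seq n) hPn).choose
    have hdisj : Disjoint (seq n) Cn := by
      rw [Set.disjoint_right]; intro x hx; exact hC1 hx
    have hPCn : P C ≤ 2 * P Cn := by
      refine le_trans (le_sSup ?_) hC4
      refine ⟨C, ?_, hCm, ?_, rfl⟩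
      · exact hCsub.trans (Set.compl_subset_compl.mpr (Set.subset_iUnion seq n))
      · calc P (seq n) + P C ≤ P Ainf + (t - P Ainf) := by
              gcongr
              exact Set.subset_iUnion seq n
        _ = t := add_tsub_cancel_of_le hle
    have hhalf : P C / 2 ≤ P Cn := by
      rw [ENNReal.div_le_iff (by norm_num) (by norm_num)]
      rwa [mul_comm] at hPCn
    rw [measure_union hdisj hC2]
    gcongr
  have hgrow : ∀ n : ℕ, (n : ℝ≥0∞) * (P C / 2) ≤ P (seq n) := by
    intro n
    induction n with
    | zero => simp
    | succ n ih =>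
      push_cast
      calc ((n : ℝ≥0∞) + 1) * (P C / 2) = (n : ℝ≥0∞) * (P C / 2) + P C / 2 := by ring
      _ ≤ P (seq n) + P C / 2 := by gcongr
      _ ≤ P (seq (n + 1)) := hstep n
  -- contradiction: the measures grow without bound
  have hhalf0 : P C / 2 ≠ 0 := by
    simp only [ne_eq, ENNReal.div_eq_zero_iff]
    push_neg
    exact ⟨hC0.ne', by norm_num⟩
  obtain ⟨n, hn⟩ := ENNReal.exists_nat_gt (ENNReal.inv_ne_top.mpr hhalf0 :
    ((P C / 2)⁻¹ : ℝ≥0∞) ≠ ∞)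
  have hhalftop : P C / 2 ≠ ∞ := by
    refine ne_top_of_le_ne_top (by simp : (1 : ℝ≥0∞) ≠ ∞) ?_
    exact le_trans (ENNReal.half_le_self) prob_le_one
  have : (1 : ℝ≥0∞) < (n : ℝ≥0∞) * (P C / 2) := by
    calc (1 : ℝ≥0∞) = (P C / 2)⁻¹ * (P C / 2) := by
          rw [ENNReal.inv_mul_cancel hhalf0 hhalftop]
    _ < (n : ℝ≥0∞) * (P C / 2) := by
          exact ENNReal.mul_lt_mul_left hhalf0 hhalftop hn
  exact absurd (le_trans (hgrow n) ((inv n).2.trans ht)) (not_le.mpr this)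

end Aux

/-- Theorem 1 (numeric form): an expected-loss notion of validity with loss value `ℓ`
nests classical validity at level `α` if and only if `ℓ = 1/α`. -/
theorem stmt_0 {Ω : Type*} [MeasurableSpace Ω] (P : Measure Ω) [IsProbabilityMeasure P]
    (hP : Atomless P) (α : ℝ) (hα : α ∈ Set.Ioo (0 : ℝ) 1) (ℓ : ℝ≥0∞) :
    (∀ A : Set Ω, MeasurableSet A → (ℓ * P A ≤ 1 ↔ P A ≤ ENNReal.ofReal α)) ↔
      ℓ = 1 / ENNReal.ofReal α := by
  obtain ⟨hα0, hα1⟩ := hα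
  set a : ℝ≥0∞ := ENNReal.ofReal α with ha
  have ha0 : a ≠ 0 := by simp [ha, ENNReal.ofReal_eq_zero, not_le, hα0]
  have hatop : a ≠ ∞ := ENNReal.ofReal_ne_top
  have ha1 : a ≤ 1 := by
    rw [ha, ← ENNReal.ofReal_one]
    exact ENNReal.ofReal_le_ofReal hα1.le
  constructor
  · intro H
    -- get a set of measure exactly `a`
    obtain ⟨A, hAm, hAeq⟩ := atomless_exists_measure_eq P hP ha1
    have h1 : ℓ * a ≤ 1 := by
      rw [← hAeq]; exact ((H A hAm).mpr (hAeq.le.trans (le_refl a))).trans (le_refl 1)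
    have hle : ℓ ≤ 1 / a := by
      rw [ENNReal.le_div_iff_mul_le (Or.inl ha0) (Or.inl hatop)]
      exact h1
    refine le_antisymm hle (not_lt.mp fun hlt => ?_)
    -- suppose ℓ < 1/a; find p with α < p < 1 and ℓ * p ≤ 1
    have hℓtop : ℓ ≠ ∞ := ne_top_of_lt hlt
    have hmul : ℓ * a < 1 := by
      have := ENNReal.mul_lt_mul_left ha0 hatop hlt
      rwa [one_div, ENNReal.inv_mul_cancel ha0 hatop] at this
    set L : ℝ := ℓ.toReal with hL
    have hL0 : 0 ≤ L := ENNReal.toReal_nonneg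
    have hLa : L * α < 1 := by
      have h3 : ENNReal.ofReal (L * α) < 1 := by
        rw [ENNReal.ofReal_mul hL0, hL, ENNReal.ofReal_toReal hℓtop, ← ha]
        exact hmul
      exact ENNReal.ofReal_lt_one.mp h3
    -- choose p
    obtain ⟨p, hpα, hp1, hLp⟩ : ∃ p : ℝ, α < p ∧ p ≤ 1 ∧ L * p ≤ 1 := by
      rcases eq_or_lt_of_le hL0 with hL0' | hLpos
      · exact ⟨(α + 1) / 2, by linarith, by linarith, by rw [← hL0']; simp⟩
      · refine ⟨min ((α + 1) / 2) ((1 + L * α) / (2 * L)), ?_, ?_, ?_⟩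
        · apply lt_min (by linarith)
          rw [lt_div_iff₀ (by linarith)]
          nlinarith
        · exact le_trans (min_le_left _ _) (by linarith)
        · calc L * min ((α + 1) / 2) ((1 + L * α) / (2 * L))
              ≤ L * ((1 + L * α) / (2 * L)) := by
                apply mul_le_mul_of_nonneg_left (min_le_right _ _) hL0
          _ = (1 + L * α) / 2 := by field_simp
          _ ≤ 1 := by linarith
    have hp0 : (0 : ℝ) ≤ p := le_trans hα0.le hpα.le
    have hple : ENNReal.ofReal p ≤ 1 := by
      rw [← ENNReal.ofReal_one]; exact ENNReal.ofReal_le_ofReal hp1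
    obtain ⟨B, hBm, hBeq⟩ := atomless_exists_measure_eq P hP hple
    have hcontra : P B ≤ a := by
      refine (H B hBm).mp ?_
      rw [hBeq, ← ENNReal.ofReal_toReal hℓtop, ← hL, ← ENNReal.ofReal_mul hL0,
        ← ENNReal.ofReal_one]
      exact ENNReal.ofReal_le_ofReal hLp
    rw [hBeq, ha, ENNReal.ofReal_le_ofReal_iff hα0.le] at hcontra
    linarith
  · rintro rfl
    intro A hAm
    rw [one_div, mul_comm, ← div_eq_mul_inv, ENNReal.div_le_iff ha0 hatop, one_mul]
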